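/- Let U ⊆ ℂ be open, let φ : U → ℂ be continuous, let g : U → ℂ be complex differentiable on U with derivative g′, let c ∈ ℂ, and let γ : ℝ → ℂ be continuously differentiable on [0,1] with γ(t) ∈ U for all t ∈ [0,1] and γ(1) = γ(0). Suppose Q : ℝ → ℂ is differentiable on [0,1] with Q′(t) = −c·φ(γ(t))·γ′(t)·Q(t) for all t ∈ [0,1] and Q(1) = Q(0). Then ∫_0^1 Q(t)·(g′(γ(t)) − c·φ(γ(t))·g(γ(t)))·γ′(t) dt = 0. Consequently, for any v : U → ℂ, the hypergeometric integral ∫_0^1 Q(t)·v(γ(t))·γ′(t) dt is unchanged when v is replaced by v − g′ + c·φ·g. (This is Corollary 3.5 of the paper: the integral I_r^γ = ∫_γ P(z)^{−r/h∨} v_r(z) dz over a closed contour γ along which P^{−r/h∨} has a single-valued branch is invariant under the residual gauge transformations v_r ↦ v_r − g′ + (rφ/h∨)g of the quasi-canonical form, so it depends only on the affine oper.) -/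

import Mathlib

/-- (Corollary 3.5.) If `Q` is a single-valued branch of
`P^{-c}` along the closed contour `γ` (i.e. `Q′ = -c·(φ∘γ)·γ′·Q` with
`Q(1) = Q(0)`), then the integral of the twisted derivative
`g′ - c·φ·g` against `Q` along `γ` vanishes; consequently the hypergeometric
integral `∫ Q·(v∘γ)·γ′` is unchanged when `v` is replaced by
`v - g′ + c·φ·g`, so it depends only on the affine oper. -/
theorem statement3 (U : Set ℂ) (hU : IsOpen U)
    (φ : ℂ → ℂ) (hφ : ContinuousOn φ U)
    (g g' : ℂ → ℂ) (hg : ∀ x ∈ U, HasDerivAt g (g' x) x)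
    (c : ℂ)
    (γ γ' : ℝ → ℂ)
    (hγd : ∀ t ∈ Set.Icc (0:ℝ) 1, HasDerivWithinAt γ (γ' t) (Set.Icc 0 1) t)
    (hγ'c : ContinuousOn γ' (Set.Icc 0 1))
    (hγU : ∀ t ∈ Set.Icc (0:ℝ) 1, γ t ∈ U)
    (hclosed : γ 1 = γ 0)
    (Q : ℝ → ℂ)
    (hQ : ∀ t ∈ Set.Icc (0:ℝ) 1,
      HasDerivWithinAt Q (-c * φ (γ t) * γ' t * Q t) (Set.Icc 0 1) t)
    (hQper : Q 1 = Q 0) :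
    (∫ t in (0:ℝ)..1, Q t * (g' (γ t) - c * φ (γ t) * g (γ t)) * γ' t) = 0
    ∧ ∀ v : ℂ → ℂ,
        (∫ t in (0:ℝ)..1,
            Q t * (v (γ t) - g' (γ t) + c * φ (γ t) * g (γ t)) * γ' t)
          = ∫ t in (0:ℝ)..1, Q t * v (γ t) * γ' t := by
  -- continuity facts
  have hγc : ContinuousOn γ (Set.Icc 0 1) := fun t ht =>
    (hγd t ht).continuousWithinAt
  have hQc : ContinuousOn Q (Set.Icc 0 1) := fun t ht =>
    (hQ t ht).continuousWithinAt
  have hgdiff : DifferentiableOn ℂ g U := fun x hx =>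
    (hg x hx).differentiableAt.differentiableWithinAt
  have hgan : AnalyticOnNhd ℂ g U := hgdiff.analyticOnNhd hU
  have hderiv_eq : ∀ x ∈ U, deriv g x = g' x := fun x hx => (hg x hx).deriv
  have hg'c : ContinuousOn g' U :=
    (hgan.deriv.continuousOn).congr fun x hx => (hderiv_eq x hx).symm
  have hgc : ContinuousOn g U := hgdiff.continuousOn
  -- the integrand is continuous on [0,1]
  have hBc : ContinuousOn
      (fun t => Q t * (g' (γ t) - c * φ (γ t) * g (γ t)) * γ' t)
      (Set.Icc 0 1) := by
    apply ContinuousOn.mul _ hγ'c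
    apply hQc.mul
    apply ContinuousOn.sub
    · exact hg'c.comp hγc hγU
    · exact (continuousOn_const.mul (hφ.comp hγc hγU)).mul (hgc.comp hγc hγU)
  have hBint : IntervalIntegrable
      (fun t => Q t * (g' (γ t) - c * φ (γ t) * g (γ t)) * γ' t)
      MeasureTheory.volume 0 1 := by
    apply ContinuousOn.intervalIntegrable
    rwa [Set.uIcc_of_le (by norm_num : (0:ℝ) ≤ 1)]
  -- F = Q * (g ∘ γ) has derivative the integrand on Icc
  have hF : ∀ t ∈ Set.Icc (0:ℝ) 1,
      HasDerivWithinAt (fun t => Q t * g (γ t))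
        (Q t * (g' (γ t) - c * φ (γ t) * g (γ t)) * γ' t) (Set.Icc 0 1) t := by
    intro t ht
    have h1 : HasDerivWithinAt (fun t => g (γ t)) (g' (γ t) * γ' t)
        (Set.Icc 0 1) t :=
      (hg (γ t) (hγU t ht)).comp_hasDerivWithinAt t (hγd t ht)
    have := (hQ t ht).mul h1
    exact this.congr_deriv (by ring)
  have hFc : ContinuousOn (fun t => Q t * g (γ t)) (Set.Icc 0 1) := fun t ht =>
    (hF t ht).continuousWithinAt
  have key :
      (∫ t in (0:ℝ)..1, Q t * (g' (γ t) - c * φ (γ t) * g (γ t)) * γ' t)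
        = Q 1 * g (γ 1) - Q 0 * g (γ 0) := by
    apply intervalIntegral.integral_eq_sub_of_hasDeriv_right_of_le
      (by norm_num) hFc _ hBint
    intro t ht
    have hmem : Set.Icc (0:ℝ) 1 ∈ nhds t := Icc_mem_nhds ht.1 ht.2
    exact (((hF t (Set.mem_Icc_of_Ioo ht)).hasDerivAt hmem).hasDerivWithinAt)
  have hzero :
      (∫ t in (0:ℝ)..1, Q t * (g' (γ t) - c * φ (γ t) * g (γ t)) * γ' t) = 0 := by
    rw [key, hclosed, hQper]; ring
  refine ⟨hzero, fun v => ?_⟩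
  have hsplit : ∀ t : ℝ,
      Q t * (v (γ t) - g' (γ t) + c * φ (γ t) * g (γ t)) * γ' t
        = Q t * v (γ t) * γ' t
          - Q t * (g' (γ t) - c * φ (γ t) * g (γ t)) * γ' t := by
    intro t; ring
  by_cases hA : IntervalIntegrable (fun t => Q t * v (γ t) * γ' t)
      MeasureTheory.volume 0 1
  · rw [show (fun t => Q t * (v (γ t) - g' (γ t) + c * φ (γ t) * g (γ t)) * γ' t)
        = fun t => Q t * v (γ t) * γ' t
          - Q t * (g' (γ t) - c * φ (γ t) * g (γ t)) * γ' t
      from funext hsplit]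
    rw [intervalIntegral.integral_sub hA hBint, hzero, sub_zero]
  · have hAB : ¬ IntervalIntegrable
        (fun t => Q t * (v (γ t) - g' (γ t) + c * φ (γ t) * g (γ t)) * γ' t)
        MeasureTheory.volume 0 1 := by
      intro h
      apply hA
      have := h.add hBint
      apply this.congr
      intro t _
      beta_reduce
      rw [hsplit t]; ring
    rw [intervalIntegral.integral_undef hAB, intervalIntegral.integral_undef hA]
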